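/- Let q be a prime power, n ≥ 2 an integer with n | q - 1, F a finite field with q elements, a ∈ F such that X^n - a is irreducible over F, b ∈ F nonzero, and h = a^((q-1)/n). For 0 ≤ i ≤ n - 1 set β_i = -b·h^{-i} ∈ F. Then: (1) the elements β_0, ..., β_{n-1} are pairwise distinct; (2) β_i^n ≠ a for every i; and (3) if e_0, ..., e_{n-1} are natural numbers and f, t ∈ F[X] satisfy f + (X^n - a)·t = ∏_{i=0}^{n-1} (h^i X + b)^{e_i}, then for every index i with e_i ≥ 1 one has t(β_i) = -f(β_i)/(β_i^n - a). -/

import Mathlib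

open Polynomial

/-- For `β i = -b * h^{-i}` (`0 ≤ i < n`): the `β i` are pairwise distinct, `β i ^ n ≠ a`,
and whenever `f + (X^n - a) t = ∏ i < n, (h^i X + b)^(e i)` and `e i ≥ 1`, one has
`t(β i) = -f(β i) / (β i ^ n - a)`. -/
theorem interpolation_points_of_list_decoding
    (q n : ℕ) (hq : IsPrimePow q) (hn : 2 ≤ n) (hdvd : n ∣ q - 1)
    (F : Type*) [Field F] [Fintype F] (hF : Fintype.card F = q)
    (a : F) (hirr : Irreducible (X ^ n - C a : F[X]))
    (b : F) (hb : b ≠ 0) (h : F) (hh : h = a ^ ((q - 1) / n))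
    (β : Fin n → F) (hβ : ∀ i : Fin n, β i = -b * (h ^ (i : ℕ))⁻¹) :
    (∀ i j : Fin n, β i = β j → i = j) ∧
    (∀ i : Fin n, β i ^ n ≠ a) ∧
    (∀ (e : Fin n → ℕ) (f t : F[X]),
      f + (X ^ n - C a) * t = ∏ i : Fin n, (C (h ^ (i : ℕ)) * X + C b) ^ e i →
      ∀ i : Fin n, 1 ≤ e i → t.eval (β i) = -f.eval (β i) / (β i ^ n - a)) := by
  classical
  have hn0 : 0 < n := by omega
  -- a ≠ 0
  have ha0 : a ≠ 0 := by
    rintro rfl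
    simp only [map_zero, sub_zero] at hirr
    rcases hirr.isUnit_or_isUnit (show (X : F[X]) ^ n = X * X ^ (n - 1) by
      rw [← pow_succ']; congr 1; omega) with hu | hu
    · exact Polynomial.not_isUnit_X hu
    · have := Polynomial.natDegree_eq_zero_of_isUnit hu
      rw [Polynomial.natDegree_pow, Polynomial.natDegree_X] at this
      omega
  have hh0 : h ≠ 0 := by rw [hh]; exact pow_ne_zero _ ha0
  -- no roots of X^n - a in F
  have hnoroot : ∀ r : F, r ^ n ≠ a := by
    intro r hr
    have hd : (X - C r) ∣ (X ^ n - C a : F[X]) := by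
      refine Polynomial.dvd_iff_isRoot.mpr ?_
      simp [Polynomial.IsRoot, hr]
    rcases hirr.dvd_iff.mp hd with hu | hassoc
    · exact Polynomial.not_isUnit_X_sub_C r hu
    · have := Polynomial.eq_of_monic_of_associated (Polynomial.monic_X_pow_sub_C a hn0.ne')
        (Polynomial.monic_X_sub_C r) hassoc
      have hdeg := congrArg Polynomial.natDegree this
      rw [Polynomial.natDegree_X_pow_sub_C, Polynomial.natDegree_X_sub_C] at hdeg
      omega
  -- card of units
  have hq1 : 1 < q := hq.one_lt
  have hcardu : Fintype.card Fˣ = q - 1 := by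
    rw [Fintype.card_units, hF]
  -- the unit H
  set ua : Fˣ := Units.mk0 a ha0 with hua
  set H : Fˣ := ua ^ ((q - 1) / n) with hH
  have hHval : (H : F) = h := by
    rw [hh, hH]; push_cast [hua]; rfl
  have hHn : H ^ n = 1 := by
    rw [hH, ← pow_mul, Nat.div_mul_cancel hdvd, ← hcardu, pow_card_eq_one]
  -- order of H is n
  have horder : orderOf H = n := by
    have hm_dvd : orderOf H ∣ n := orderOf_dvd_of_pow_eq_one hHn
    set m := orderOf H with hm
    have hm0 : 0 < m := orderOf_pos H
    by_contra hne
    have hmn : m < n := lt_of_le_of_ne (Nat.le_of_dvd hn0 hm_dvd) hne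
    obtain ⟨k, hk⟩ := hm_dvd
    have hk1 : 1 < k := by
      rcases Nat.lt_or_ge k 2 with hk2 | hk2
      · interval_cases k <;> omega
      · exact hk2
    -- ua ^ ((q-1)/k) = 1
    obtain ⟨d, hd⟩ := hdvd
    have hkq : (q - 1) / k = m * d := by
      have : q - 1 = k * (m * d) := by rw [hd, hk]; ring
      rw [this, Nat.mul_div_cancel_left _ (by omega)]
    have huak : ua ^ ((q - 1) / k) = 1 := by
      have hHm : H ^ m = 1 := pow_orderOf_eq_one H
      rw [hH, ← pow_mul] at hHm
      have : (q - 1) / n * m = (q - 1) / k := by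
        rw [hkq, hd, hk, Nat.mul_div_cancel_left _ (by positivity)]
        ring
      rwa [this] at hHm
    -- hence a is a k-th power
    obtain ⟨g, hg⟩ := IsCyclic.exists_monoid_generator (α := Fˣ)
    have hog : orderOf g = q - 1 := by
      rw [orderOf_eq_card_of_forall_mem_zpowers (fun x =>
        Subgroup.mem_zpowers_iff.mpr (by
          obtain ⟨s, hs⟩ := hg x
          exact ⟨(s : ℤ), by exact_mod_cast hs⟩)), Nat.card_eq_fintype_card, hcardu]
    obtain ⟨s, hs0⟩ := hg ua
    have hs : g ^ s = ua := hs0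
    have hgs : g ^ (s * ((q - 1) / k)) = 1 := by
      rw [pow_mul, hs, huak]
    have hdvd2 : q - 1 ∣ s * ((q - 1) / k) := by
      have := orderOf_dvd_of_pow_eq_one hgs
      rwa [hog] at this
    have hkdvd : k ∣ s := by
      have hkq1 : k ∣ q - 1 := ⟨m * d, by rw [hd, hk]; ring⟩
      obtain ⟨e, he⟩ := hkq1
      have he0 : 0 < e := by
        rcases Nat.eq_zero_or_pos e with h0 | h0
        · subst h0; omega
        · exact h0
      have : k * e ∣ s * e := by
        rw [← he]
        have : (q - 1) / k = e := by rw [he, Nat.mul_div_cancel_left _ (by omega)]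
        rwa [this] at hdvd2
      exact (mul_dvd_mul_iff_right he0.ne').mp this
    obtain ⟨s', hs'⟩ := hkdvd
    have hck : ((g ^ s' : Fˣ) : F) ^ k = a := by
      have : (g ^ s') ^ k = ua := by rw [← hs, ← pow_mul, hs', mul_comm]
      calc ((g ^ s' : Fˣ) : F) ^ k = (((g ^ s') ^ k : Fˣ) : F) := by push_cast; ring
        _ = a := by rw [this, hua]; rfl
    set c : F := ((g ^ s' : Fˣ) : F) with hc
    -- X^m - C c divides X^n - C a
    have hdvd3 : (X ^ m - C c : F[X]) ∣ (X ^ n - C a) := by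
      have : (X ^ n - C a : F[X]) = (X ^ m) ^ k - (C c) ^ k := by
        rw [← pow_mul, ← map_pow, hck, hk]
      rw [this]
      exact sub_dvd_pow_sub_pow _ _ k
    rcases hirr.dvd_iff.mp hdvd3 with hu | hassoc
    · have := Polynomial.natDegree_eq_zero_of_isUnit hu
      rw [Polynomial.natDegree_X_pow_sub_C] at this
      omega
    · have := Polynomial.eq_of_monic_of_associated (Polynomial.monic_X_pow_sub_C a hn0.ne')
        (Polynomial.monic_X_pow_sub_C c hm0.ne') hassoc
      have hdeg := congrArg Polynomial.natDegree this
      rw [Polynomial.natDegree_X_pow_sub_C, Polynomial.natDegree_X_pow_sub_C] at hdeg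
      omega
  -- injectivity
  have hinj : ∀ i j : Fin n, β i = β j → i = j := by
    intro i j hij
    rw [hβ i, hβ j] at hij
    have h1 : (h ^ (i : ℕ))⁻¹ = (h ^ (j : ℕ))⁻¹ := by
      exact mul_left_cancel₀ (neg_ne_zero.mpr hb) hij
    have h2 : h ^ (i : ℕ) = h ^ (j : ℕ) := by
      have := congrArg (·⁻¹) h1
      simpa using this
    have h3 : H ^ (i : ℕ) = H ^ (j : ℕ) := by
      apply Units.ext
      push_cast [hHval]
      exact h2
    have h4 := pow_eq_pow_iff_modEq.mp h3
    rw [horder] at h4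
    have : (i : ℕ) % n = (j : ℕ) % n := h4
    rw [Nat.mod_eq_of_lt i.isLt, Nat.mod_eq_of_lt j.isLt] at this
    exact Fin.ext this
  refine ⟨hinj, fun i => hnoroot (β i), ?_⟩
  intro e f t heq i hei
  have hβn : β i ^ n - a ≠ 0 := sub_ne_zero_of_ne (hnoroot (β i))
  have heval := congrArg (Polynomial.eval (β i)) heq
  simp only [Polynomial.eval_add, Polynomial.eval_mul, Polynomial.eval_sub,
    Polynomial.eval_pow, Polynomial.eval_X, Polynomial.eval_C,
    Polynomial.eval_prod] at heval
  have hzero : ∏ j : Fin n, (h ^ (j : ℕ) * β i + b) ^ e j = 0 := by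
    apply Finset.prod_eq_zero (Finset.mem_univ i)
    have : h ^ (i : ℕ) * β i + b = 0 := by
      rw [hβ i]
      field_simp
      ring
    rw [this, zero_pow (by omega)]
  rw [hzero] at heval
  have : t.eval (β i) * (β i ^ n - a) = -f.eval (β i) := by linear_combination heval
  field_simp [hβn]
  linear_combination this
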